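/- Let T be a rank one selfadjoint bounded operator on a complex Hilbert space H with tr T ≠ 0. Then the semigroup S(T) = {T^n : n ≥ 1} is simple if and only if tr T ∈ {−1, 1}. -/

import Mathlib

open ContinuousLinearMap
open scoped ComplexInnerProductSpace

variable {H : Type*} [NormedAddCommGroup H] [InnerProductSpace ℂ H] [CompleteSpace H]

/-- `J` is a (two-sided) semigroup-ideal of `S`. -/
def IsSemigroupIdeal {M : Type*} [Mul M] (S J : Set M) : Prop :=
  J ⊆ S ∧ ∀ T ∈ J, ∀ X ∈ S, X * T ∈ J ∧ T * X ∈ J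

/-- `S` is a selfadjoint-ideal (SI) semigroup: every semigroup-ideal of `S`
is closed under adjoints. -/
def IsSI (S : Set (H →L[ℂ] H)) : Prop :=
  ∀ J : Set (H →L[ℂ] H), IsSemigroupIdeal S J → ∀ T ∈ J, adjoint T ∈ J

/-- `S` is simple: every ideal of `S` containing a nonzero element equals `S`. -/
def IsSimpleSemigroup {M : Type*} [Mul M] [Zero M] (S : Set M) : Prop :=
  ∀ J : Set M, IsSemigroupIdeal S J → (∃ T ∈ J, T ≠ 0) → J = S

/-- `S(T, T*)`: the semigroup generated by `T` and `T*`, i.e. all finite products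
`A₁ ⋯ A_k` (`k ≥ 1`) with each `Aᵢ ∈ {T, T*}`. -/
noncomputable def genSG (T : H →L[ℂ] H) : Set (H →L[ℂ] H) :=
  (Subsemigroup.closure {T, adjoint T} : Subsemigroup (H →L[ℂ] H))

/-- for `T` rank one selfadjoint with `tr T ≠ 0`, the semigroup
`S(T) = {T^n : n ≥ 1}` is simple iff `tr T ∈ {-1, 1}`.  (The paper's trace
`⟨T f, f⟩` is `⟪f, T f⟫` in Mathlib's convention.) -/
theorem stmt10 (T : H →L[ℂ] H) (hsa : T = adjoint T) (f : H) (hf : ‖f‖ = 1)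
    (hrange : LinearMap.range (T : H →ₗ[ℂ] H) = Submodule.span ℂ {f})
    (htr : ⟪f, T f⟫ ≠ 0) :
    IsSimpleSemigroup {A : H →L[ℂ] H | ∃ n : ℕ, 1 ≤ n ∧ A = T ^ n} ↔
      ⟪f, T f⟫ = -1 ∨ ⟪f, T f⟫ = 1 := by
  set c : ℂ := ⟪f, T f⟫ with hc
  have hf0 : f ≠ 0 := by
    intro h; rw [h, norm_zero] at hf; norm_num at hf
  -- T f = c • f
  have hTf : T f = c • f := by
    have hmem : T f ∈ Submodule.span ℂ ({f} : Set H) := by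
      rw [← hrange]; exact LinearMap.mem_range.mpr ⟨f, rfl⟩
    obtain ⟨b, hb⟩ := Submodule.mem_span_singleton.mp hmem
    have hbc : c = b := by
      rw [hc, ← hb, inner_smul_right, inner_self_eq_norm_sq_to_K, hf]
      norm_num
    rw [hbc, hb]
  have hT0 : T ≠ 0 := by
    intro h
    have h0 : c • f = 0 := by rw [← hTf, h]; rfl
    rcases smul_eq_zero.mp h0 with h' | h'
    · exact htr h'
    · exact hf0 h' 
  -- T * T = c • T
  have hsq : T * T = c • T := by
    ext x
    have hmem : T x ∈ Submodule.span ℂ ({f} : Set H) := by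
      rw [← hrange]; exact LinearMap.mem_range.mpr ⟨x, rfl⟩
    obtain ⟨a, ha⟩ := Submodule.mem_span_singleton.mp hmem
    calc (T * T) x = T (T x) := rfl
      _ = T (a • f) := by rw [ha]
      _ = a • T f := by rw [map_smul]
      _ = a • (c • f) := by rw [hTf]
      _ = c • (a • f) := smul_comm a c f
      _ = c • T x := by rw [ha]
      _ = (c • T) x := rfl
  -- T^(n+1) = c^n • T
  have hpow : ∀ n : ℕ, T ^ (n + 1) = c ^ n • T := by
    intro n
    induction n with
    | zero => simp
    | succ n ih =>
        rw [pow_succ, ih, smul_mul_assoc, hsq, smul_smul, ← pow_succ]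
  have hpow' : ∀ n : ℕ, 1 ≤ n → T ^ n = c ^ (n - 1) • T := by
    intro n hn
    obtain ⟨m, rfl⟩ := Nat.exists_eq_add_of_le hn
    rw [Nat.add_comm 1 m]
    simpa using hpow m
  -- c is real
  have hcreal : (starRingEnd ℂ) c = c := by
    rw [hc, inner_conj_symm]
    nth_rewrite 1 [hsa]
    rw [adjoint_inner_left]
  constructor
  · -- simple → c = ±1
    intro hsimple
    set J : Set (H →L[ℂ] H) := {A | ∃ n : ℕ, 2 ≤ n ∧ A = T ^ n} with hJ
    have hideal : IsSemigroupIdeal {A : H →L[ℂ] H | ∃ n : ℕ, 1 ≤ n ∧ A = T ^ n} J := by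
      constructor
      · rintro A ⟨n, hn, rfl⟩; exact ⟨n, by omega, rfl⟩
      · rintro A ⟨n, hn, rfl⟩ X ⟨m, hm, rfl⟩
        exact ⟨⟨m + n, by omega, (pow_add T m n).symm⟩,
               ⟨n + m, by omega, (pow_add T n m).symm⟩⟩
    have hc0 : c ≠ 0 := htr
    have hne : ∃ A ∈ J, A ≠ 0 := by
      refine ⟨T ^ 2, ⟨2, le_refl 2, rfl⟩, ?_⟩
      rw [show (2 : ℕ) = 1 + 1 from rfl, hpow 1, pow_one]
      exact smul_ne_zero hc0 hT0
    have hJS := hsimple J hideal hne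
    have hTJ : T ∈ J := by
      rw [hJS]; exact ⟨1, le_refl 1, (pow_one T).symm⟩
    obtain ⟨n, hn2, hTn⟩ := hTJ
    rw [hpow' n (by omega)] at hTn
    have hck : c ^ (n - 1) = 1 := by
      by_contra hck
      have : (c ^ (n - 1) - 1) • T = 0 := by
        rw [sub_smul, one_smul, ← hTn, sub_self]
      rcases smul_eq_zero.mp this with h | h
      · exact hck (by linear_combination h)
      · exact hT0 h
    -- c is real, so c = c.re
    have hre : c = (c.re : ℂ) := (Complex.conj_eq_iff_re.mp hcreal).symm
    have hrek : (c.re : ℝ) ^ (n - 1) = 1 := by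
      have := hck
      rw [hre] at this
      exact_mod_cast this
    have := pow_eq_one_iff_cases.mp hrek
    rcases this with h | h | h
    · omega
    · right; rw [hre, h]; norm_num
    · left; rw [hre, h.1]; norm_num
  · -- c = ±1 → simple
    intro hc1
    have hc2 : c ^ 2 = 1 := by
      rcases hc1 with h | h <;> rw [h] <;> norm_num
    rintro J hJ ⟨A, hAJ, -⟩
    obtain ⟨n, hn1, hAn⟩ := hJ.1 hAJ
    refine Set.Subset.antisymm hJ.1 ?_
    rintro B ⟨m, hm1, rfl⟩
    have h1 : T ^ (m + n) ∈ {A : H →L[ℂ] H | ∃ k : ℕ, 1 ≤ k ∧ A = T ^ k} :=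
      ⟨m + n, by omega, rfl⟩
    have h2 : T ^ (m + n) * A ∈ J := (hJ.2 A hAJ _ h1).1
    have h3 : T ^ (m + n) * A = T ^ (m + 2 * n) := by
      rw [hAn, ← pow_add]; congr 1; omega
    have h4 : T ^ (m + 2 * n) = T ^ m := by
      rw [hpow' (m + 2 * n) (by omega), hpow' m hm1]
      congr 1
      have : m + 2 * n - 1 = (m - 1) + 2 * n := by omega
      rw [this, pow_add, pow_mul, hc2, one_pow, mul_one]
    rw [← h4, ← h3]
    exact h2
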